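/- A numerical semigroup S is a non proper half-line semigroup, i.e., S = {0} ∪ {k ∈ ℕ : k ≥ m} for some integer m > 1, if and only if there exists a real interval [p,q] with p > 1 such that S = S([p,q]) and S = S([p,q']) for all q' ≥ q. -/
import Mathlib


/-- The numerical semigroup `𝒮(I) = ⋃_{k∈ℕ} k·I ∩ ℕ` generated by a real interval `I`. -/
def NSet (I : Set ℝ) : Set ℕ := {m | ∃ k : ℕ, ∃ r ∈ I, (m : ℝ) = (k : ℝ) * r}

lemma halfline_NSet (m : ℕ) (hm : 1 < m) (q' : ℝ) (hq' : (2 * m : ℝ) ≤ q') :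
    ({0} ∪ {k : ℕ | m ≤ k} : Set ℕ) = NSet (Set.Icc (m : ℝ) q') := by
  ext n
  constructor
  · rintro (rfl | hn)
    · exact ⟨0, m, ⟨le_refl _, le_trans (by have : (0:ℝ) ≤ m := Nat.cast_nonneg m; linarith) hq'⟩, by simp⟩
    · refine ⟨n / m, (n : ℝ) / (n / m : ℕ), ⟨?_, ?_⟩, ?_⟩
      · -- m ≤ n / (n/m)
        have hk : 1 ≤ n / m := (Nat.one_le_div_iff (by omega)).2 hn
        have h1 : (n / m) * m ≤ n := Nat.div_mul_le_self n m
        rw [le_div_iff₀ (by positivity), mul_comm]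
        exact_mod_cast h1
      · -- n / (n/m) ≤ q'
        have hk : 1 ≤ n / m := (Nat.one_le_div_iff (by omega)).2 hn
        have hdm := Nat.div_add_mod n m
        have hmod : n % m < m := Nat.mod_lt n (by omega)
        have h3 : n ≤ (n / m) * (2 * m) := by nlinarith
        rw [div_le_iff₀ (by positivity)]
        calc (n : ℝ) ≤ (n / m : ℕ) * (2 * m) := by exact_mod_cast h3
          _ ≤ (n / m : ℕ) * q' := by gcongr
          _ = q' * (n / m : ℕ) := mul_comm _ _
      · have hk : 1 ≤ n / m := (Nat.one_le_div_iff (by omega)).2 hn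
        rw [mul_div_cancel₀]
        positivity
  · rintro ⟨k, r, ⟨hr1, hr2⟩, hn⟩
    rcases Nat.eq_zero_or_pos k with rfl | hk
    · left; simp at hn; exact_mod_cast hn
    · right
      have : (m : ℝ) ≤ n := by
        calc (m : ℝ) = 1 * m := (one_mul _).symm
          _ ≤ k * r := by
              apply mul_le_mul (by exact_mod_cast hk) hr1 (by positivity) (by positivity)
          _ = n := hn.symm
      exact_mod_cast this

/-- **Lemma.** A numerical semigroup `S` is a non proper half-line semigroup, i.e.
`S = {0} ∪ [m,∞) ∩ ℕ` for some integer `m > 1`, if and only if there is an interval `[p,q]`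
with `p > 1` such that `S = 𝒮([p,q])` and `S = 𝒮([p,q'])` for all `q' ≥ q`. -/
theorem stmt8 (S : Set ℕ) (h0 : 0 ∈ S) (hadd : ∀ a ∈ S, ∀ b ∈ S, a + b ∈ S)
    (hfin : Sᶜ.Finite) :
    (∃ m : ℕ, 1 < m ∧ S = {0} ∪ {k : ℕ | m ≤ k}) ↔
    (∃ p q : ℝ, 1 < p ∧ p ≤ q ∧ S = NSet (Set.Icc p q) ∧
      ∀ q' : ℝ, q ≤ q' → S = NSet (Set.Icc p q')) := by
  constructor
  · rintro ⟨m, hm, rfl⟩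
    refine ⟨(m : ℝ), 2 * m, by exact_mod_cast hm, by have : (0:ℝ) ≤ m := Nat.cast_nonneg m; linarith, ?_, ?_⟩
    · exact halfline_NSet m hm _ (le_refl _)
    · intro q' hq'; exact halfline_NSet m hm q' hq'
  · rintro ⟨p, q, hp, hpq, hSq, hall⟩
    refine ⟨⌈p⌉₊, Nat.lt_ceil.2 (by exact_mod_cast hp), ?_⟩
    ext n
    constructor
    · intro hn
      rw [hSq] at hn
      obtain ⟨k, r, ⟨hr1, hr2⟩, hnr⟩ := hn
      rcases Nat.eq_zero_or_pos k with rfl | hk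
      · left; simp at hnr; exact_mod_cast hnr
      · right
        have hpn : p ≤ n := by
          calc p = 1 * p := (one_mul _).symm
            _ ≤ k * r := by
                apply mul_le_mul (by exact_mod_cast hk) hr1 (by linarith) (by positivity)
            _ = n := hnr.symm
        exact Nat.ceil_le.2 hpn
    · rintro (rfl | hn)
      · rw [hSq]
        exact ⟨0, p, ⟨le_refl _, hpq⟩, by simp⟩
      · have hpn : p ≤ n := le_trans (Nat.le_ceil p) (by exact_mod_cast hn)
        rw [hall (max q n) (le_max_left _ _)]
        exact ⟨1, n, ⟨hpn, le_max_right _ _⟩, by simp⟩
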